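/- For every finite connected simple graph G with at least 3 vertices, the number of spanning trees of G is strictly less than the product of the degrees of all vertices: T(G) < Π_{v ∈ V(G)} deg(v). -/
import Mathlib


open SimpleGraph BigOperators

/-- The edge set `s ⊆ E(G)` spans a tree: the graph on `V` with edge set `s` is
connected and acyclic. -/
def IsSpanningTreeEdgeSet {V : Type*} (G : SimpleGraph V) (s : Set (Sym2 V)) : Prop :=
  s ⊆ G.edgeSet ∧ (SimpleGraph.fromEdgeSet s).Connected ∧
    (SimpleGraph.fromEdgeSet s).IsAcyclic

section Aux

set_option linter.unusedSectionVars false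

open SimpleGraph BigOperators

variable {V : Type*} [DecidableEq V]

/-- A chosen walk between reachable vertices. -/
noncomputable def chosenWalk {G : SimpleGraph V} {u v : V} (h : G.Reachable u v) :
    G.Walk u v := Classical.choice h

/-- The parent of `v` toward the root `r` in a connected graph. -/
noncomputable def treeParent (G : SimpleGraph V) (hc : G.Connected) (r v : V) : V :=
  ((chosenWalk (hc.preconnected v r)).toPath : G.Walk v r).getVert 1

lemma treeParent_eq {G : SimpleGraph V} (hc : G.Connected) (hac : G.IsAcyclic)
    {r v : V} (p : G.Walk v r) (hp : p.IsPath) :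
    treeParent G hc r v = p.getVert 1 := by
  have h := hac.path_unique (chosenWalk (hc.preconnected v r)).toPath ⟨p, hp⟩
  unfold treeParent
  rw [h]

lemma treeParent_adj {G : SimpleGraph V} (hc : G.Connected) {r v : V} (hv : v ≠ r) :
    G.Adj v (treeParent G hc r v) := by
  set p : G.Walk v r := ((chosenWalk (hc.preconnected v r)).toPath : G.Walk v r) with hpdef
  have hlen : 0 < p.length := by
    rcases Nat.eq_zero_or_pos p.length with h | h
    · exact absurd (SimpleGraph.Walk.eq_of_length_eq_zero h) hv
    · exact h
  have := p.adj_getVert_succ hlen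
  rwa [SimpleGraph.Walk.getVert_zero] at this

lemma treeParent_edge {G : SimpleGraph V} (hc : G.Connected) (hac : G.IsAcyclic)
    {r a b : V} (hab : G.Adj a b) :
    (a ≠ r ∧ treeParent G hc r a = b) ∨ (b ≠ r ∧ treeParent G hc r b = a) := by
  classical
  by_cases har : a = r
  · subst har
    refine Or.inr ⟨hab.ne', ?_⟩
    have hp : (SimpleGraph.Walk.cons hab.symm SimpleGraph.Walk.nil).IsPath := by
      simp [hab.ne']
    rw [treeParent_eq hc hac _ hp]
    rfl
  · set p : G.Walk a r := ((chosenWalk (hc.preconnected a r)).toPath : G.Walk a r) with hpdef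
    have hp : p.IsPath := (chosenWalk (hc.preconnected a r)).toPath.2
    by_cases hb : b ∈ p.support
    · -- takeUntil is a path from a to b; unique path is the single edge
      have ht : (p.takeUntil b hb).IsPath := hp.takeUntil hb
      have hone : (SimpleGraph.Walk.cons hab SimpleGraph.Walk.nil).IsPath := by
        simp [hab.ne]
      have huniq := hac.path_unique ⟨p.takeUntil b hb, ht⟩ ⟨SimpleGraph.Walk.cons hab SimpleGraph.Walk.nil, hone⟩
      have hspec := p.take_spec hb
      refine Or.inl ⟨har, ?_⟩
      have : p = SimpleGraph.Walk.cons hab (p.dropUntil b hb) := by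
        conv_lhs => rw [← hspec]
        rw [show p.takeUntil b hb = SimpleGraph.Walk.cons hab SimpleGraph.Walk.nil from congrArg Subtype.val huniq]
        rfl
      have := treeParent_eq hc hac p hp
      rw [this]
      conv_lhs => rw [‹p = SimpleGraph.Walk.cons hab (p.dropUntil b hb)›]
      simp [SimpleGraph.Walk.getVert_zero]
    · have hbr : b ≠ r := fun h => hb (h ▸ p.end_mem_support)
      have hcons : (SimpleGraph.Walk.cons hab.symm p).IsPath := hp.cons hb
      refine Or.inr ⟨hbr, ?_⟩
      rw [treeParent_eq hc hac _ hcons]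
      simp [SimpleGraph.Walk.getVert_zero]

lemma exists_deg_two_aux {G : SimpleGraph V} [Fintype V] [DecidableRel G.Adj]
    {x y : V} (p : G.Walk x y) (hp : p.IsPath) (h2 : 2 ≤ p.length) :
    ∃ v, 2 ≤ G.degree v := by
  cases p with
  | nil => simp at h2
  | @cons _ m _ h q =>
    cases q with
    | nil => simp at h2
    | @cons _ w _ h' q' =>
      refine ⟨m, ?_⟩
      rw [SimpleGraph.Walk.cons_isPath_iff] at hp
      have hxw : x ≠ w := by
        intro hxweq
        subst hxweq
        exact hp.2 (by rw [SimpleGraph.Walk.support_cons]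
                       exact List.mem_cons_of_mem _ q'.start_mem_support)
      have h1 : x ∈ G.neighborFinset m := by
        rw [SimpleGraph.mem_neighborFinset]; exact h.symm
      have h2' : w ∈ G.neighborFinset m := by
        rw [SimpleGraph.mem_neighborFinset]; exact h'
      exact Finset.one_lt_card.mpr ⟨x, h1, w, h2', hxw⟩

lemma exists_adj_of_ne {G : SimpleGraph V} (hconn : G.Connected) {v w : V} (hvw : v ≠ w) :
    ∃ u, G.Adj v u := by
  set p := chosenWalk (hconn.preconnected v w) with hp
  have hlen : 0 < p.length := by
    rcases Nat.eq_zero_or_pos p.length with h | h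
    · exact absurd (SimpleGraph.Walk.eq_of_length_eq_zero h) hvw
    · exact h
  refine ⟨p.getVert 1, ?_⟩
  have := p.adj_getVert_succ hlen
  rwa [SimpleGraph.Walk.getVert_zero] at this

lemma exists_deg_two {G : SimpleGraph V} [Fintype V] [DecidableRel G.Adj]
    (hconn : G.Connected) (hn : 3 ≤ Fintype.card V) :
    ∃ r, 2 ≤ G.degree r := by
  obtain ⟨a, b, c, hab, hac, hbc⟩ := Fintype.two_lt_card_iff.mp (show 2 < Fintype.card V by omega)
  set p : G.Walk b a := ((chosenWalk (hconn.preconnected b a)).toPath : G.Walk b a) with hpdef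
  set q : G.Walk c a := ((chosenWalk (hconn.preconnected c a)).toPath : G.Walk c a) with hqdef
  have hp : p.IsPath := (chosenWalk (hconn.preconnected b a)).toPath.2
  have hq : q.IsPath := (chosenWalk (hconn.preconnected c a)).toPath.2
  have hplen : 0 < p.length := by
    rcases Nat.eq_zero_or_pos p.length with h | h
    · exact absurd (SimpleGraph.Walk.eq_of_length_eq_zero h) (Ne.symm hab)
    · exact h
  have hqlen : 0 < q.length := by
    rcases Nat.eq_zero_or_pos q.length with h | h
    · exact absurd (SimpleGraph.Walk.eq_of_length_eq_zero h) (fun h' => hac h'.symm)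
    · exact h
  by_cases hp2 : 2 ≤ p.length
  · exact exists_deg_two_aux p hp hp2
  by_cases hq2 : 2 ≤ q.length
  · exact exists_deg_two_aux q hq hq2
  · have hp1 : p.length = 1 := by omega
    have hq1 : q.length = 1 := by omega
    have hba : G.Adj b a := by
      have := p.adj_getVert_succ (by omega : 0 < p.length)
      rw [SimpleGraph.Walk.getVert_zero] at this
      have h1 : p.getVert 1 = a := by
        rw [← hp1]; exact p.getVert_length
      rwa [h1] at this
    have hca : G.Adj c a := by
      have := q.adj_getVert_succ (by omega : 0 < q.length)
      rw [SimpleGraph.Walk.getVert_zero] at this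
      have h1 : q.getVert 1 = a := by
        rw [← hq1]; exact q.getVert_length
      rwa [h1] at this
    refine ⟨a, Finset.one_lt_card.mpr ⟨b, ?_, c, ?_, hbc⟩⟩
    · rw [SimpleGraph.mem_neighborFinset]; exact hba.symm
    · rw [SimpleGraph.mem_neighborFinset]; exact hca.symm

lemma subset_of_parent_eq {G : SimpleGraph V} {r : V} {s₁ s₂ : Set (Sym2 V)}
    (h₁ : IsSpanningTreeEdgeSet G s₁) (h₂ : IsSpanningTreeEdgeSet G s₂)
    (hpar : ∀ v, v ≠ r →
      treeParent (SimpleGraph.fromEdgeSet s₁) h₁.2.1 r v =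
      treeParent (SimpleGraph.fromEdgeSet s₂) h₂.2.1 r v) :
    s₁ ⊆ s₂ := by
  intro e he
  induction e using Sym2.ind with
  | _ a b =>
    have hGadj : G.Adj a b := (G.mem_edgeSet).mp (h₁.1 he)
    have hadj1 : (SimpleGraph.fromEdgeSet s₁).Adj a b :=
      (SimpleGraph.fromEdgeSet_adj s₁).mpr ⟨he, hGadj.ne⟩
    rcases treeParent_edge h₁.2.1 h₁.2.2 (r := r) hadj1 with ⟨har, hpa⟩ | ⟨hbr, hpb⟩
    · have h2 := treeParent_adj h₂.2.1 (r := r) har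
      rw [← hpar a har, hpa] at h2
      exact ((SimpleGraph.fromEdgeSet_adj s₂).mp h2).1
    · have h2 := treeParent_adj h₂.2.1 (r := r) hbr
      rw [← hpar b hbr, hpb] at h2
      rw [Sym2.eq_swap]
      exact ((SimpleGraph.fromEdgeSet_adj s₂).mp h2).1


end Aux

/-- **Ribó Mor's proposition, part 1.** For every finite connected simple graph with at
least 3 vertices, the number of spanning trees is strictly smaller than the product of
all vertex degrees. -/
theorem spanning_trees_lt_prod_degrees
    {V : Type*} [Fintype V] [DecidableEq V]
    (G : SimpleGraph V) [DecidableRel G.Adj] (hconn : G.Connected)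
    (hn : 3 ≤ Fintype.card V) :
    {s : Set (Sym2 V) | IsSpanningTreeEdgeSet G s}.ncard < ∏ v : V, G.degree v := by
  classical
  obtain ⟨r, hr2⟩ := exists_deg_two hconn hn
  set S := {s : Set (Sym2 V) | IsSpanningTreeEdgeSet G s} with hS
  -- the injection into parent functions
  let β := ∀ v : {v : V // v ≠ r}, {u : V // u ∈ G.neighborFinset v.1}
  have hFex : ∃ F : S → β, Function.Injective F := by
    refine ⟨fun s v => ⟨treeParent (SimpleGraph.fromEdgeSet s.1) s.2.2.1 r v.1, ?_⟩, ?_⟩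
    · have hadj := treeParent_adj s.2.2.1 (r := r) v.2
      rw [SimpleGraph.mem_neighborFinset]
      exact (G.mem_edgeSet).mp (s.2.1 ((SimpleGraph.fromEdgeSet_adj s.1).mp hadj).1)
    · rintro ⟨s₁, h₁⟩ ⟨s₂, h₂⟩ hF
      have hpar : ∀ v, v ≠ r →
          treeParent (SimpleGraph.fromEdgeSet s₁) h₁.2.1 r v =
          treeParent (SimpleGraph.fromEdgeSet s₂) h₂.2.1 r v := by
        intro v hv
        have := congrFun hF ⟨v, hv⟩
        exact congrArg Subtype.val this
      exact Subtype.ext (Set.Subset.antisymm (subset_of_parent_eq h₁ h₂ hpar)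
        (subset_of_parent_eq h₂ h₁ (fun v hv => (hpar v hv).symm)))
  obtain ⟨F, hFinj⟩ := hFex
  have hcard : S.ncard ≤ Fintype.card β := by
    rw [← Nat.card_coe_set_eq]
    exact (Nat.card_le_card_of_injective F hFinj).trans_eq Nat.card_eq_fintype_card
  have hβ : Fintype.card β = ∏ v ∈ Finset.univ.erase r, G.degree v := by
    rw [Fintype.card_pi]
    have hc : ∀ i : {v : V // v ≠ r}, Fintype.card {u : V // u ∈ G.neighborFinset i.1}
        = G.degree i.1 := fun i => by
      rw [Fintype.card_coe]
      rfl
    rw [Finset.prod_congr rfl (fun i _ => hc i)]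
    exact (Finset.prod_subtype (p := fun v => v ≠ r) (Finset.univ.erase r)
      (fun x => by simp) (fun v => G.degree v)).symm
  have hprod : ∏ v : V, G.degree v = G.degree r * ∏ v ∈ Finset.univ.erase r, G.degree v :=
    (Finset.mul_prod_erase Finset.univ _ (Finset.mem_univ r)).symm
  have hpos : 0 < ∏ v ∈ Finset.univ.erase r, G.degree v := by
    apply Finset.prod_pos
    intro v hv
    rw [SimpleGraph.degree_pos_iff_exists_adj]
    exact exists_adj_of_ne hconn (Finset.mem_erase.mp hv).1
  calc S.ncard ≤ ∏ v ∈ Finset.univ.erase r, G.degree v := hβ ▸ hcard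
    _ < G.degree r * ∏ v ∈ Finset.univ.erase r, G.degree v := by
        have : 1 * (∏ v ∈ Finset.univ.erase r, G.degree v)
            < G.degree r * ∏ v ∈ Finset.univ.erase r, G.degree v :=
          (Nat.mul_lt_mul_right hpos).mpr (by omega)
        simpa using this
    _ = ∏ v : V, G.degree v := hprod.symm
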